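/- MMS dominates MXS: for every monotone valuation v, MXS(M, v, n) ≤ MMS(M, v, n); hence every MMS allocation is an MXS allocation. -/

import Mathlib

open Finset

/-- `P` is a partition of the finite set `X` into `n` (possibly empty) parts. -/
def IsPartitionOn {M : Type*} [DecidableEq M] {n : ℕ} (X : Finset M) (P : Fin n → Finset M) : Prop :=
  (∀ i j, i ≠ j → Disjoint (P i) (P j)) ∧ Finset.univ.biUnion P = X

/-- `t` is residual self-feasible for valuation `v` on the item set `X` with `n` agents:
for every `0 ≤ k < n`, after removing any `k` pairwise disjoint bundles of `X`, each of
`v`-value strictly less than `t`, the remaining items admit an `(n-k)`-partition in which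
every part has `v`-value at least `t`. -/
def RSF {M : Type*} [DecidableEq M] {α : Type*} [Preorder α] (v : Finset M → α) (n : ℕ)
    (X : Finset M) (t : α) : Prop :=
  ∀ k, k < n → ∀ B : Fin k → Finset M,
    (∀ i j, i ≠ j → Disjoint (B i) (B j)) → (∀ i, B i ⊆ X) → (∀ i, v (B i) < t) →
    ∃ P : Fin (n - k) → Finset M,
      (∀ i j, i ≠ j → Disjoint (P i) (P j)) ∧
      Finset.univ.biUnion P = X \ Finset.univ.biUnion B ∧
      ∀ i, t ≤ v (P i)

/-- There is a partition in which the minimum-value bundle has no EFX envy toward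
any other bundle. -/
lemma exists_minEFX_partition {M : Type*} [Fintype M] [DecidableEq M] {n : ℕ} (hn : 1 ≤ n)
    (v : Finset M → NNReal) (hmono : ∀ S T : Finset M, S ⊆ T → v S ≤ v T) :
    ∃ A : Fin n → Finset M, ∃ s : Fin n, IsPartitionOn Finset.univ A ∧
      (∀ j, v (A s) ≤ v (A j)) ∧ ∀ j, ∀ e ∈ A j, v (A j \ {e}) ≤ v (A s) := by
  classical
  haveI : NeZero n := ⟨by omega⟩
  set z : Fin n := 0 with hz
  -- the (finite) set of all n-partitions of univ
  let Ps : Finset (Fin n → Finset M) :=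
    Finset.univ.filter (fun P => IsPartitionOn Finset.univ P)
  have hne : Ps.Nonempty := by
    refine ⟨fun j => if j = z then (Finset.univ : Finset M) else ∅, ?_⟩
    simp only [Ps, mem_filter, mem_univ, true_and]
    constructor
    · intro a b hab
      by_cases ha : a = z
      · have hb : b ≠ z := fun h => hab (ha.trans h.symm)
        simp [ha, hb]
      · simp [ha]
    · apply Finset.eq_univ_of_forall
      intro x
      exact mem_biUnion.mpr ⟨z, mem_univ z, by simp⟩
  -- potential components
  have hzu : z ∈ (Finset.univ : Finset (Fin n)) := mem_univ z
  let mval : (Fin n → Finset M) → NNReal :=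
    fun P => Finset.univ.inf' ⟨z, hzu⟩ (fun j => v (P j))
  let T : (Fin n → Finset M) → Finset (Fin n) :=
    fun P => Finset.univ.filter (fun j => v (P j) = mval P)
  let Φ : (Fin n → Finset M) → Lex (NNReal × Lex (ℕ × ℕ)) :=
    fun P => toLex (mval P, toLex (n - (T P).card, ∑ j ∈ T P, (P j).card))
  obtain ⟨A, hAPs, hmax⟩ := Finset.exists_max_image Ps Φ hne
  have hA : IsPartitionOn Finset.univ A := (Finset.mem_filter.mp hAPs).2
  obtain ⟨s, -, hs⟩ := Finset.exists_min_image Finset.univ (fun j => v (A j)) ⟨z, hzu⟩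
  have hsmin : ∀ j, v (A s) ≤ v (A j) := fun j => hs j (mem_univ j)
  refine ⟨A, s, hA, hsmin, ?_⟩
  by_contra hcon
  push_neg at hcon
  obtain ⟨j, e, he, hgt⟩ := hcon
  have hjs : j ≠ s := by
    intro h; subst h
    exact absurd (hmono _ _ Finset.sdiff_subset) (not_le.mpr hgt)
  -- the improved partition
  set A' : Fin n → Finset M :=
    fun k => if k = s then A s ∪ {e} else if k = j then A j \ {e} else A k with hA'def
  have henotin : ∀ k, k ≠ j → e ∉ A k := by
    intro k hk hek
    exact (Finset.disjoint_left.mp (hA.1 k j hk) hek) he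
  have hA'j : A' j = A j \ {e} := by simp [A', hjs]
  have hA's : A' s = A s ∪ {e} := by simp [A']
  have hA'k : ∀ k, k ≠ s → k ≠ j → A' k = A k := by
    intro k h1 h2; simp [A', h1, h2]
  have hA' : IsPartitionOn Finset.univ A' := by
    constructor
    · intro a b hab
      have key : ∀ c, c ≠ s → Disjoint (A s ∪ {e}) (A' c) := by
        intro c hc
        apply Finset.disjoint_union_left.mpr
        constructor
        · by_cases hcj : c = j
          · rw [hcj, hA'j]
            exact (hA.1 s j (Ne.symm hjs)).mono_right Finset.sdiff_subset
          · rw [hA'k c hc hcj]; exact hA.1 s c (Ne.symm hc)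
        · rw [Finset.disjoint_singleton_left]
          by_cases hcj : c = j
          · rw [hcj, hA'j]; simp
          · rw [hA'k c hc hcj]; exact henotin c hcj
      by_cases has : a = s
      · subst has; rw [hA's]; exact key b (Ne.symm hab)
      · by_cases hbs : b = s
        · subst hbs; rw [hA's] at *
          exact (key a (fun h => hab h)).symm
        · -- neither is s
          by_cases haj : a = j
          · rw [haj, hA'j, hA'k b hbs (fun h => hab (haj.trans h.symm))]
            exact (hA.1 j b (haj ▸ hab)).mono_left Finset.sdiff_subset
          · by_cases hbj : b = j
            · rw [hbj, hA'j, hA'k a has haj]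
              exact ((hA.1 j a (fun h => hab (h.symm.trans hbj.symm))).mono_left
                Finset.sdiff_subset).symm
            · rw [hA'k a has haj, hA'k b hbs hbj]
              exact hA.1 a b hab
    · apply Finset.eq_univ_of_forall
      intro x
      have hx : x ∈ Finset.univ.biUnion A := by rw [hA.2]; exact mem_univ x
      obtain ⟨k, -, hk⟩ := mem_biUnion.mp hx
      apply mem_biUnion.mpr
      by_cases hks : k = s
      · exact ⟨s, mem_univ s, by rw [hA's]; exact Finset.mem_union_left _ (hks ▸ hk)⟩
      · by_cases hkj : k = j
        · by_cases hxe : x = e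
          · exact ⟨s, mem_univ s, by rw [hA's]; exact Finset.mem_union_right _ (by simp [hxe])⟩
          · exact ⟨j, mem_univ j, by
              rw [hA'j]; exact Finset.mem_sdiff.mpr ⟨hkj ▸ hk, by simp [hxe]⟩⟩
        · exact ⟨k, mem_univ k, by rw [hA'k k hks hkj]; exact hk⟩
  have hA'Ps : A' ∈ Ps := Finset.mem_filter.mpr ⟨mem_univ _, hA'⟩
  -- value facts
  have hmA : mval A = v (A s) :=
    le_antisymm (Finset.inf'_le _ (mem_univ s)) (Finset.le_inf' _ _ (fun b _ => hsmin b))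
  have hvA's : v (A s) ≤ v (A' s) := by rw [hA's]; exact hmono _ _ Finset.subset_union_left
  have hvA'j : v (A s) < v (A' j) := by rw [hA'j]; exact hgt
  have hvAj : v (A s) < v (A j) :=
    lt_of_lt_of_le hgt (hmono _ _ Finset.sdiff_subset)
  have hvall : ∀ k, v (A s) ≤ v (A' k) := by
    intro k
    by_cases hks : k = s
    · subst hks; exact hvA's
    · by_cases hkj : k = j
      · subst hkj; exact hvA'j.le
      · rw [hA'k k hks hkj]; exact hsmin k
  have hmA'ge : v (A s) ≤ mval A' := Finset.le_inf' _ _ (fun b _ => hvall b)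
  -- derive the strict potential increase
  have hlt : Φ A < Φ A' := by
    rcases eq_or_lt_of_le hmA'ge with hmeq | hmlt
    swap
    · -- min value strictly increased
      exact Prod.Lex.toLex_lt_toLex.mpr (Or.inl (by rw [hmA]; exact hmlt))
    · -- min value unchanged
      apply Prod.Lex.toLex_lt_toLex.mpr
      right
      refine ⟨by rw [hmA, hmeq], ?_⟩
      have hjT : j ∉ T A := by
        simp only [T, mem_filter, mem_univ, true_and]
        rw [hmA]; exact (ne_of_gt hvAj)
      have hjT' : j ∉ T A' := by
        simp only [T, mem_filter, mem_univ, true_and]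
        rw [← hmeq]; exact (ne_of_gt hvA'j)
      have hsT : s ∈ T A := by
        simp only [T, mem_filter, mem_univ, true_and]; rw [hmA]
      have hkT : ∀ k, k ≠ s → k ≠ j → (k ∈ T A' ↔ k ∈ T A) := by
        intro k h1 h2
        simp only [T, mem_filter, mem_univ, true_and]
        rw [hA'k k h1 h2, ← hmeq, hmA]
      rcases eq_or_lt_of_le hvA's with hseq | hslt
      · -- s still a min-value bundle: total size of min bundles increases
        have hTT : T A' = T A := by
          ext k
          by_cases h1 : k = s
          · subst h1
            simp only [T, mem_filter, mem_univ, true_and]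
            rw [← hseq, ← hmeq, hmA]
          · by_cases h2 : k = j
            · subst h2; simp [hjT, hjT']
            · exact hkT k h1 h2
        apply Prod.Lex.toLex_lt_toLex.mpr
        right
        refine ⟨by rw [hTT], ?_⟩
        rw [hTT]
        show (∑ k ∈ T A, (A k).card) < ∑ k ∈ T A, (A' k).card
        apply Finset.sum_lt_sum
        · intro k hkTA
          by_cases h1 : k = s
          · subst h1
            exact Finset.card_le_card (by rw [hA's]; exact Finset.subset_union_left)
          · have h2 : k ≠ j := fun h => hjT (h ▸ hkTA)
            rw [hA'k k h1 h2]
        · refine ⟨s, hsT, ?_⟩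
          rw [hA's]
          have : A s ∪ {e} = insert e (A s) := by
            rw [Finset.union_comm]; rfl
          rw [this, Finset.card_insert_of_notMem (henotin s (Ne.symm hjs))]
          omega
      · -- s no longer a min-value bundle: count of min bundles decreases
        have hTT : T A' = (T A).erase s := by
          ext k
          rw [Finset.mem_erase]
          by_cases h1 : k = s
          · subst h1
            simp only [T, mem_filter, mem_univ, true_and]
            constructor
            · intro h; exact absurd h.symm (ne_of_lt (lt_of_le_of_lt hmeq.symm.le hslt))
            · intro h; exact absurd rfl h.1
          · by_cases h2 : k = j
            · subst h2; simp [hjT, hjT']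
            · rw [hkT k h1 h2]; simp [h1]
        apply Prod.Lex.toLex_lt_toLex.mpr
        left
        have hcard : (T A').card = (T A).card - 1 := by
          rw [hTT, Finset.card_erase_of_mem hsT]
        have h1 : 1 ≤ (T A).card := Finset.card_pos.mpr ⟨s, hsT⟩
        have h2 : (T A).card ≤ n := by
          calc (T A).card ≤ (Finset.univ : Finset (Fin n)).card := Finset.card_filter_le _ _
          _ = n := Finset.card_univ.trans (Fintype.card_fin n)
        rw [hcard]
        omega
  exact absurd (hmax A' hA'Ps) (not_le.mpr hlt)

/-- MMS dominates MXS: `MXS ≤ MMS`; hence every MMS allocation is an MXS allocation. -/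
theorem mxs_le_mms {M : Type*} [Fintype M] [DecidableEq M] (n : ℕ) (hn : 1 ≤ n)
    (v : Fin n → Finset M → NNReal)
    (hmono : ∀ i, ∀ S T : Finset M, S ⊆ T → v i S ≤ v i T)
    (hzero : ∀ i, v i ∅ = 0)
    (μ x : Fin n → NNReal)
    (hμ : ∀ i, IsGreatest {t : NNReal | ∃ P : Fin n → Finset M,
        IsPartitionOn Finset.univ P ∧ ∀ j, t ≤ v i (P j)} (μ i))
    (hx : ∀ i, IsLeast {y : NNReal | ∃ S : Finset M, y = v i S ∧
        ∃ A : Fin n → Finset M, IsPartitionOn Finset.univ A ∧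
          A i = S ∧ ∀ j, j ≠ i → ∀ e ∈ A j, v i (A j \ {e}) ≤ v i S} (x i)) :
    (∀ i, x i ≤ μ i) ∧
      ∀ A : Fin n → Finset M, IsPartitionOn Finset.univ A →
        (∀ i, μ i ≤ v i (A i)) → ∀ i, x i ≤ v i (A i) := by
  have part1 : ∀ i, x i ≤ μ i := by
    intro i
    obtain ⟨A, s, hA, hmin, hefx⟩ := exists_minEFX_partition hn (v i) (hmono i)
    have h1 : v i (A s) ≤ μ i := (hμ i).2 ⟨A, hA, fun j => hmin j⟩
    -- reindex so that agent i receives bundle A s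
    set σ := Equiv.swap i s with hσ
    set A'' : Fin n → Finset M := fun k => A (σ k) with hA''def
    have hA'' : IsPartitionOn Finset.univ A'' := by
      constructor
      · intro a b hab
        exact hA.1 _ _ (fun h => hab (σ.injective h))
      · apply Finset.eq_univ_of_forall
        intro y
        have hy : y ∈ Finset.univ.biUnion A := by rw [hA.2]; exact mem_univ y
        obtain ⟨k, -, hk⟩ := mem_biUnion.mp hy
        exact mem_biUnion.mpr ⟨σ.symm k, mem_univ _, by
          simp only [A'', Equiv.apply_symm_apply]; exact hk⟩
    have hAi : A'' i = A s := by simp [A'', σ, Equiv.swap_apply_left]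
    have hmem : v i (A s) ∈ {y : NNReal | ∃ S : Finset M, y = v i S ∧
        ∃ B : Fin n → Finset M, IsPartitionOn Finset.univ B ∧
          B i = S ∧ ∀ j, j ≠ i → ∀ e ∈ B j, v i (B j \ {e}) ≤ v i S} :=
      ⟨A s, rfl, A'', hA'', hAi, fun j _ e hej => hefx (σ j) e hej⟩
    exact le_trans ((hx i).2 hmem) h1
  exact ⟨part1, fun A _ hge i => (part1 i).trans (hge i)⟩
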